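/- Let U be a finite regular subset of ℤ² and L : ℝ⁴ → ℝ a C² discrete Lagrangian. Suppose φ : cl U → ℝ solves the discrete Euler–Lagrange equations at every interior point of U, and V, W are first-variation solutions at φ. Then Σ over boundary points (i,j) ∈ ∂U, and over rectangles □ ⊆ U with (i,j) = □^l, of Σ_{k=1}^4 (∂²L/∂y_k∂y_l)(φ(□^1),…,φ(□^4))·(V(□^k)W(□^l) − V(□^l)W(□^k)) equals 0 (the discrete multisymplectic form formula). -/

import Mathlib

open scoped BigOperators

/-- The four vertices of the grid rectangle with base point `b`. -/
def vert (b : ℤ × ℤ) : Fin 4 → ℤ × ℤ :=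
  ![b, (b.1 + 1, b.2), (b.1 + 1, b.2 + 1), (b.1, b.2 + 1)]

/-- Base point of the rectangle having `p` as its `l`-th vertex. -/
def rbase (p : ℤ × ℤ) : Fin 4 → ℤ × ℤ :=
  ![p, (p.1 - 1, p.2), (p.1 - 1, p.2 - 1), (p.1, p.2 - 1)]

/-- The values of a field `φ` at the four vertices of the rectangle at `b`. -/
def args (φ : ℤ × ℤ → ℝ) (b : ℤ × ℤ) : Fin 4 → ℝ := fun k => φ (vert b k)

/-- Standard basis vector of `ℝ⁴`. -/
noncomputable def E4 (l : Fin 4) : Fin 4 → ℝ := Pi.single l 1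

/-- Second partial derivative `∂²L/∂y_k∂y_l`. -/
noncomputable def D2 (L : (Fin 4 → ℝ) → ℝ) (a : Fin 4 → ℝ) (k l : Fin 4) : ℝ :=
  fderiv ℝ (fun z => fderiv ℝ L z (E4 l)) a (E4 k)

/-- The rectangle at `b` is contained in `U`. -/
def rectIn (U : Set (ℤ × ℤ)) (b : ℤ × ℤ) : Prop := ∀ k, vert b k ∈ U

/-- Interior points of `U`: all four rectangles touching the point lie in `U`. -/
def intr (U : Set (ℤ × ℤ)) : Set (ℤ × ℤ) := {p | ∀ l : Fin 4, rectIn U (rbase p l)}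

/-- Closure of `U`: union of all cells touching interior points of `U`. -/
def clos (U : Set (ℤ × ℤ)) : Set (ℤ × ℤ) :=
  {q | ∃ p ∈ intr U, ∃ l k, vert (rbase p l) k = q}

/-- Boundary points of `U`. -/
def bdry (U : Set (ℤ × ℤ)) : Set (ℤ × ℤ) := (U ∩ clos U) \ intr U

/-! ### Auxiliary material -/

/-- The multisymplectic summand. -/
noncomputable def msT (L : (Fin 4 → ℝ) → ℝ) (φ V W : ℤ × ℤ → ℝ) (p : ℤ × ℤ) (l : Fin 4) : ℝ :=
  ∑ k : Fin 4, D2 L (args φ (rbase p l)) k l *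
    (V (vert (rbase p l) k) * W p - V p * W (vert (rbase p l) k))

lemma vert_rbase (p : ℤ × ℤ) (l : Fin 4) : vert (rbase p l) l = p := by
  fin_cases l <;> simp [vert, rbase]

lemma rbase_vert (b : ℤ × ℤ) (l : Fin 4) : rbase (vert b l) l = b := by
  fin_cases l <;> simp [vert, rbase]

lemma D2_symm {L : (Fin 4 → ℝ) → ℝ} (hL : ContDiff ℝ 2 L) (a : Fin 4 → ℝ) (k l : Fin 4) :
    D2 L a k l = D2 L a l k := by
  have hd : DifferentiableAt ℝ (fderiv ℝ L) a :=
    ((hL.fderiv_right (m := 1) (by norm_num)).differentiable (by norm_num)) a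
  have key : ∀ m j : Fin 4, D2 L a m j = fderiv ℝ (fderiv ℝ L) a (E4 m) (E4 j) := by
    intro m j
    have := fderiv_clm_apply (c := fderiv ℝ L) (u := fun _ => E4 j) hd (differentiableAt_const _)
    simp only [D2, this, fderiv_const, fderiv_fun_const, Pi.zero_apply, ContinuousLinearMap.comp_zero,
      add_zero, ContinuousLinearMap.add_apply, ContinuousLinearMap.flip_apply,
      ContinuousLinearMap.zero_apply, zero_add]
  rw [key, key]
  exact (hL.contDiffAt.isSymmSndFDerivAt (by norm_num)) (E4 k) (E4 l)

/-- On a single box, the multisymplectic sum vanishes by symmetry of the second derivative. -/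
lemma box_zero {L : (Fin 4 → ℝ) → ℝ} (hL : ContDiff ℝ 2 L) (φ V W : ℤ × ℤ → ℝ) (b : ℤ × ℤ) :
    ∑ l : Fin 4, msT L φ V W (vert b l) l = 0 := by
  have h1 : ∀ l, msT L φ V W (vert b l) l = ∑ k : Fin 4, D2 L (args φ b) k l *
      (V (vert b k) * W (vert b l) - V (vert b l) * W (vert b k)) := by
    intro l; simp only [msT, rbase_vert]
  set A : Fin 4 → Fin 4 → ℝ := fun l k => D2 L (args φ b) k l *
      (V (vert b k) * W (vert b l) - V (vert b l) * W (vert b k)) with hA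
  have hanti : ∀ l k, A l k = - A k l := by
    intro l k; simp only [hA]; rw [D2_symm hL]; ring
  have h2 : (∑ l : Fin 4, ∑ k : Fin 4, A l k) = - ∑ l : Fin 4, ∑ k : Fin 4, A l k := by
    calc (∑ l : Fin 4, ∑ k : Fin 4, A l k) = ∑ k : Fin 4, ∑ l : Fin 4, A l k :=
          Finset.sum_comm
      _ = ∑ k : Fin 4, ∑ l : Fin 4, (- A k l) :=
          Finset.sum_congr rfl fun k _ => Finset.sum_congr rfl fun l _ => hanti l k
      _ = - ∑ l : Fin 4, ∑ k : Fin 4, A l k := by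
          simp [Finset.sum_neg_distrib]
  simp only [h1]
  linarith

/-- At an interior point where the first-variation equations hold, the multisymplectic
sum over all four boxes vanishes. -/
lemma intr_zero (L : (Fin 4 → ℝ) → ℝ) (φ V W : ℤ × ℤ → ℝ) (p : ℤ × ℤ)
    (hVp : ∑ l : Fin 4, ∑ k : Fin 4,
      D2 L (args φ (rbase p l)) k l * V (vert (rbase p l) k) = 0)
    (hWp : ∑ l : Fin 4, ∑ k : Fin 4,
      D2 L (args φ (rbase p l)) k l * W (vert (rbase p l) k) = 0) :
    ∑ l : Fin 4, msT L φ V W p l = 0 := by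
  have h : ∀ l k : Fin 4, D2 L (args φ (rbase p l)) k l *
      (V (vert (rbase p l) k) * W p - V p * W (vert (rbase p l) k))
      = (D2 L (args φ (rbase p l)) k l * V (vert (rbase p l) k)) * W p
        - V p * (D2 L (args φ (rbase p l)) k l * W (vert (rbase p l) k)) := by
    intro l k; ring
  simp only [msT, h, Finset.sum_sub_distrib, ← Finset.sum_mul, ← Finset.mul_sum, hVp, hWp,
    zero_mul, mul_zero, sub_zero]

theorem stmt14 (U : Set (ℤ × ℤ)) (hUfin : U.Finite)
    (hreg : U = intr U ∪ bdry U)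
    (L : (Fin 4 → ℝ) → ℝ) (hL : ContDiff ℝ 2 L)
    (φ V W : ℤ × ℤ → ℝ)
    (hφ : ∀ p ∈ intr U, ∑ l : Fin 4, fderiv ℝ L (args φ (rbase p l)) (E4 l) = 0)
    (hV : ∀ p ∈ intr U, ∑ l : Fin 4, ∑ k : Fin 4,
      D2 L (args φ (rbase p l)) k l * V (vert (rbase p l) k) = 0)
    (hW : ∀ p ∈ intr U, ∑ l : Fin 4, ∑ k : Fin 4,
      D2 L (args φ (rbase p l)) k l * W (vert (rbase p l) k) = 0) :
    ∑ᶠ p ∈ bdry U, ∑ᶠ l ∈ {l : Fin 4 | rectIn U (rbase p l)}, ∑ k : Fin 4,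
      D2 L (args φ (rbase p l)) k l *
        (V (vert (rbase p l) k) * W p - V p * W (vert (rbase p l) k)) = 0 := by
  classical
  -- Abbreviate the inner double sum.
  have hgoal : (∑ᶠ p ∈ bdry U, ∑ᶠ l ∈ {l : Fin 4 | rectIn U (rbase p l)}, ∑ k : Fin 4,
      D2 L (args φ (rbase p l)) k l *
        (V (vert (rbase p l) k) * W p - V p * W (vert (rbase p l) k)))
      = ∑ᶠ p ∈ bdry U, ∑ᶠ l ∈ {l : Fin 4 | rectIn U (rbase p l)}, msT L φ V W p l := rfl
  rw [hgoal]
  have hBsub : bdry U ⊆ U := fun p hp => hp.1.1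
  have hIsub : intr U ⊆ U := by
    intro p hp
    have := hp 0 0
    simpa [vert, rbase] using this
  have hBfin : (bdry U).Finite := hUfin.subset hBsub
  have hIfin : (intr U).Finite := hUfin.subset hIsub
  have hdisj : Disjoint (intr U) (bdry U) := disjoint_sdiff_self_right
  -- the inner finsum as a Finset sum
  have hH : ∀ p : ℤ × ℤ, (∑ᶠ l ∈ {l : Fin 4 | rectIn U (rbase p l)}, msT L φ V W p l)
      = ∑ l ∈ Finset.univ.filter (fun l : Fin 4 => rectIn U (rbase p l)), msT L φ V W p l := by
    intro p
    rw [finsum_mem_eq_finite_toFinset_sum _ (Set.toFinite _)]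
    congr 1
    ext l
    simp
  -- the sum over all of U, reindexed by boxes, vanishes
  have hU0 : ∑ p ∈ hUfin.toFinset,
      ∑ l ∈ Finset.univ.filter (fun l : Fin 4 => rectIn U (rbase p l)), msT L φ V W p l = 0 := by
    have key : ∑ p ∈ hUfin.toFinset,
        ∑ l ∈ Finset.univ.filter (fun l : Fin 4 => rectIn U (rbase p l)), msT L φ V W p l
        = ∑ b ∈ hUfin.toFinset.filter (fun b => rectIn U b), ∑ l : Fin 4,
            msT L φ V W (vert b l) l := by
      rw [Finset.sum_sigma' (s := hUfin.toFinset), Finset.sum_sigma'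
        (s := hUfin.toFinset.filter (fun b => rectIn U b)) (t := fun _ => Finset.univ)]
      refine Finset.sum_nbij' (i := fun x : Σ _ : ℤ × ℤ, Fin 4 => (⟨rbase x.1 x.2, x.2⟩ : Σ _ : ℤ × ℤ, Fin 4))
        (j := fun x : Σ _ : ℤ × ℤ, Fin 4 => (⟨vert x.1 x.2, x.2⟩ : Σ _ : ℤ × ℤ, Fin 4))
        ?_ ?_ ?_ ?_ ?_
      · rintro ⟨p, l⟩ hx
        simp only [Finset.mem_sigma, Set.Finite.mem_toFinset, Finset.mem_filter,
          Finset.mem_univ, true_and] at hx ⊢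
        refine ⟨⟨?_, hx.2⟩, trivial⟩
        have := hx.2 0
        simpa [vert] using this
      · rintro ⟨b, l⟩ hx
        simp only [Finset.mem_sigma, Set.Finite.mem_toFinset, Finset.mem_filter,
          Finset.mem_univ, true_and, and_true] at hx ⊢
        exact ⟨hx.2 l, by rw [rbase_vert]; exact hx.2⟩
      · rintro ⟨p, l⟩ hx
        simp [vert_rbase]
      · rintro ⟨b, l⟩ hx
        simp [rbase_vert]
      · rintro ⟨p, l⟩ hx
        simp only []
        rw [vert_rbase]
    rw [key]
    exact Finset.sum_eq_zero fun b _ => box_zero hL φ V W b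
  -- splitting U into interior and boundary
  have hsplit : (∑ᶠ p ∈ U, ∑ᶠ l ∈ {l : Fin 4 | rectIn U (rbase p l)}, msT L φ V W p l)
      = (∑ᶠ p ∈ intr U, ∑ᶠ l ∈ {l : Fin 4 | rectIn U (rbase p l)}, msT L φ V W p l)
        + ∑ᶠ p ∈ bdry U, ∑ᶠ l ∈ {l : Fin 4 | rectIn U (rbase p l)}, msT L φ V W p l := by
    have h := finsum_mem_union (f := fun p => ∑ᶠ l ∈ {l : Fin 4 | rectIn U (rbase p l)},
      msT L φ V W p l) hdisj hIfin hBfin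
    rw [← hreg] at h
    exact h
  -- sum over U is zero
  have hUzero : (∑ᶠ p ∈ U, ∑ᶠ l ∈ {l : Fin 4 | rectIn U (rbase p l)}, msT L φ V W p l) = 0 := by
    rw [finsum_mem_eq_finite_toFinset_sum _ hUfin]
    rw [← hU0]
    exact Finset.sum_congr rfl fun p _ => hH p
  -- sum over the interior is zero
  have hIzero : (∑ᶠ p ∈ intr U, ∑ᶠ l ∈ {l : Fin 4 | rectIn U (rbase p l)}, msT L φ V W p l)
      = 0 := by
    rw [finsum_mem_eq_finite_toFinset_sum _ hIfin]
    refine Finset.sum_eq_zero fun p hp => ?_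
    rw [Set.Finite.mem_toFinset] at hp
    have hSuniv : {l : Fin 4 | rectIn U (rbase p l)} = Set.univ :=
      Set.eq_univ_of_forall fun l => hp l
    rw [hSuniv, finsum_mem_univ, finsum_eq_sum_of_fintype]
    exact intr_zero L φ V W p (hV p hp) (hW p hp)
  linarith [hsplit, hUzero, hIzero]
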